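/- Variation of the constant for formal linear differential systems: let R be a commutative ring which is a ℚ-algebra, m ≥ 1, k ≥ 0 and ℓ ≥ 0. Let A, M, W be m×m matrices of formal power series in z over R such that the constant-coefficient matrix of M is the identity, M′ = A·M, and W ≡ M mod z^{k+1} entrywise (so the constant-coefficient matrix of W is the identity and W is invertible over the matrix ring of power series). Let B be a vector of m formal power series in z, each either zero or of valuation at least ℓ, let V be the vector of power series with zero constant coefficients satisfying V′ = W^{-1}·B, and let S be a vector of power series with zero constant coefficients satisfying S′ = A·S + B. Then W·V ≡ S mod z^{k+ℓ+2} componentwise. -/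

import Mathlib

open PowerSeries Finset

set_option linter.deprecated false in
private lemma vc_dfun {R : Type*} [CommRing R] (f : PowerSeries R) :
    derivativeFun f = derivative R f := rfl

private lemma vc_deriv_sub {R : Type*} [CommRing R] (f g : PowerSeries R) :
    derivativeFun (f - g) = derivativeFun f - derivativeFun g := by
  ext n
  simp [vc_dfun, coeff_derivativeFun, sub_mul]

private lemma vc_deriv_sum {R : Type*} [CommRing R] {ι : Type*} (s : Finset ι)
    (f : ι → PowerSeries R) :
    derivativeFun (∑ j ∈ s, f j) = ∑ j ∈ s, derivativeFun (f j) := by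
  ext n
  simp [vc_dfun, coeff_derivativeFun, Finset.sum_mul]

private lemma vc_cancel {R : Type*} [CommRing R] [Algebra ℚ R] {x : R} {n : ℕ}
    (h : x * ((n : R) + 1) = 0) : x = 0 := by
  have hu : IsUnit ((n : R) + 1) := by
    have h1 : ((n : R) + 1) = algebraMap ℚ R ((n : ℚ) + 1) := by
      push_cast; ring
    rw [h1]
    exact (isUnit_iff_ne_zero.mpr (by positivity)).map _
  obtain ⟨u, hu⟩ := hu
  rwa [← hu, Units.mul_left_eq_zero] at h

private lemma vc_coeff_mulVec_zero {R : Type*} [CommRing R] {m : ℕ}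
    (N : Matrix (Fin m) (Fin m) (PowerSeries R)) (v : Fin m → PowerSeries R) (n : ℕ)
    (h : ∀ j, ∀ q ≤ n, PowerSeries.coeff (R := R) q (v j) = 0) (i : Fin m) :
    PowerSeries.coeff (R := R) n (N.mulVec v i) = 0 := by
  simp only [Matrix.mulVec, dotProduct, map_sum]
  refine Finset.sum_eq_zero fun j _ => ?_
  rw [PowerSeries.coeff_mul]
  refine Finset.sum_eq_zero fun p hp => ?_
  rw [Finset.HasAntidiagonal.mem_antidiagonal] at hp
  rw [h j p.2 (by omega), mul_zero]

/-- **Variation of the constant for formal linear differential systems.**  Over a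
commutative `ℚ`-algebra `R`, let `M' = A·M` with the constant-coefficient matrix of `M`
equal to the identity, and let `W ≡ M  mod z^(k+1)` entrywise (so `W` is invertible over
the matrix ring of power series).  If every `B i` has valuation at least `ℓ` (all
coefficients vanish in degrees `< ℓ`), `V` has zero constant coefficients and
`V' = W⁻¹·B`, and `S` has zero constant coefficients and `S' = A·S + B`, then
`W·V ≡ S mod z^(k+ℓ+2)` componentwise. -/
theorem variation_of_the_constant {R : Type*} [CommRing R] [Algebra ℚ R]
    {m : ℕ} (hm : 1 ≤ m) (k ℓ : ℕ)
    (A M W : Matrix (Fin m) (Fin m) (PowerSeries R))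
    (hM0 : M.map (PowerSeries.constantCoeff (R := R)) = 1)
    (hM' : ∀ i j, PowerSeries.derivativeFun (M i j) = (A * M) i j)
    (hWM : ∀ i j, ∀ n ≤ k, PowerSeries.coeff (R := R) n (W i j) = PowerSeries.coeff (R := R) n (M i j))
    (B : Fin m → PowerSeries R)
    (hB : ∀ i, ∀ n < ℓ, PowerSeries.coeff (R := R) n (B i) = 0)
    (V : Fin m → PowerSeries R)
    (hV0 : ∀ i, PowerSeries.constantCoeff (R := R) (V i) = 0)
    (hV' : ∀ i, PowerSeries.derivativeFun (V i) = (Ring.inverse W).mulVec B i)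
    (S : Fin m → PowerSeries R)
    (hS0 : ∀ i, PowerSeries.constantCoeff (R := R) (S i) = 0)
    (hS' : ∀ i, PowerSeries.derivativeFun (S i) = A.mulVec S i + B i) :
    IsUnit W ∧
      ∀ i, ∀ n < k + ℓ + 2,
        PowerSeries.coeff (R := R) n (W.mulVec V i) = PowerSeries.coeff (R := R) n (S i) := by
  classical
  -- constant coefficient matrix of W is the identity
  have hW0 : W.map (PowerSeries.constantCoeff (R := R)) = 1 := by
    rw [← hM0]
    ext i j
    simp only [Matrix.map_apply, ← PowerSeries.coeff_zero_eq_constantCoeff]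
    exact hWM i j 0 (Nat.zero_le k)
  -- W is a unit
  have hWunit : IsUnit W := by
    rw [Matrix.isUnit_iff_isUnit_det, PowerSeries.isUnit_iff_constantCoeff,
      RingHom.map_det, RingHom.mapMatrix_apply, hW0, Matrix.det_one]
    exact isUnit_one
  refine ⟨hWunit, ?_⟩
  -- V has valuation > ℓ
  have hVval : ∀ j, ∀ q ≤ ℓ, PowerSeries.coeff (R := R) q (V j) = 0 := by
    intro j q hq
    match q with
    | 0 => simpa [PowerSeries.coeff_zero_eq_constantCoeff] using hV0 j
    | q + 1 =>
      apply vc_cancel (n := q)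
      push_cast
      rw [← PowerSeries.coeff_derivativeFun, ← vc_dfun, hV' j]
      exact vc_coeff_mulVec_zero _ _ _ (fun j' q' hq' => hB j' q' (by omega)) j
  -- the defect matrix D = W' - A·W vanishes mod z^k
  set D : Matrix (Fin m) (Fin m) (PowerSeries R) :=
    Matrix.of (fun i j => PowerSeries.derivativeFun (W i j) - (A * W) i j) with hD
  have hAWcoeff : ∀ i j, ∀ p ≤ k, PowerSeries.coeff (R := R) p ((A * W) i j)
      = PowerSeries.coeff (R := R) p ((A * M) i j) := by
    intro i j p hp
    simp only [Matrix.mul_apply, map_sum, PowerSeries.coeff_mul]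
    refine Finset.sum_congr rfl fun j' _ => Finset.sum_congr rfl fun q hq => ?_
    rw [Finset.HasAntidiagonal.mem_antidiagonal] at hq
    rw [hWM j' j q.2 (by omega)]
  have hDcoeff : ∀ i j, ∀ p < k, PowerSeries.coeff (R := R) p (D i j) = 0 := by
    intro i j p hp
    simp only [hD, Matrix.of_apply, map_sub]
    rw [vc_dfun, PowerSeries.coeff_derivativeFun, hWM i j (p + 1) (by omega),
      ← PowerSeries.coeff_derivativeFun, ← vc_dfun, hM', hAWcoeff i j p (by omega), sub_self]
  -- the error vector
  set E : Fin m → PowerSeries R := fun i => W.mulVec V i - S i with hE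
  -- derivative identity:  E' = D·V + A·E
  have hE' : ∀ i, PowerSeries.derivativeFun (E i) = D.mulVec V i + A.mulVec E i := by
    intro i
    have h1 : PowerSeries.derivativeFun (W.mulVec V i)
        = D.mulVec V i + A.mulVec (W.mulVec V) i + B i := by
      have : W.mulVec V i = ∑ j, W i j * V j := rfl
      rw [this, vc_deriv_sum]
      have hsum : ∀ j, PowerSeries.derivativeFun (W i j * V j)
          = W i j * PowerSeries.derivativeFun (V j)
            + PowerSeries.derivativeFun (W i j) * V j := by
        intro j
        rw [PowerSeries.derivativeFun_mul]
        simp [smul_eq_mul, mul_comm]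
      simp only [hsum, Finset.sum_add_distrib]
      have h2 : ∑ j, W i j * PowerSeries.derivativeFun (V j) = B i := by
        have : ∑ j, W i j * PowerSeries.derivativeFun (V j)
            = W.mulVec (fun j => PowerSeries.derivativeFun (V j)) i := rfl
        rw [this]
        have : (fun j => PowerSeries.derivativeFun (V j))
            = (Ring.inverse W).mulVec B := funext hV'
        rw [this, Matrix.mulVec_mulVec, Ring.mul_inverse_cancel W hWunit,
          Matrix.one_mulVec]
      have h3 : ∑ j, PowerSeries.derivativeFun (W i j) * V j
          = D.mulVec V i + A.mulVec (W.mulVec V) i := by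
        have hDV : D.mulVec V i = ∑ j, (PowerSeries.derivativeFun (W i j) - (A * W) i j) * V j := rfl
        have hAW : A.mulVec (W.mulVec V) i = ∑ j, (A * W) i j * V j := by
          rw [Matrix.mulVec_mulVec]; rfl
        rw [hDV, hAW]
        simp [sub_mul, Finset.sum_sub_distrib]
      rw [h2, h3]
      ring
    rw [hE]
    simp only [vc_deriv_sub, h1, hS' i]
    have : A.mulVec E i = A.mulVec (W.mulVec V) i - A.mulVec S i := by
      rw [hE, show (fun i => W.mulVec V i - S i) = W.mulVec V - S from rfl,
        Matrix.mulVec_sub]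
      rfl
    rw [this]
    ring
  -- coefficients of E vanish up to degree k+ℓ+1
  have key : ∀ n, n ≤ k + ℓ + 1 → ∀ i, PowerSeries.coeff (R := R) n (E i) = 0 := by
    intro n
    induction n using Nat.strong_induction_on with
    | _ n ih =>
      intro hn i
      match n with
      | 0 =>
        simp only [hE, map_sub]
        rw [vc_coeff_mulVec_zero _ _ _ (fun j q hq => by
          interval_cases q
          simpa [PowerSeries.coeff_zero_eq_constantCoeff] using hV0 j) i]
        simpa [PowerSeries.coeff_zero_eq_constantCoeff] using hS0 i
      | n + 1 =>
        apply vc_cancel (n := n)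
        push_cast
        rw [← PowerSeries.coeff_derivativeFun, ← vc_dfun, hE' i, map_add]
        have hDV : PowerSeries.coeff (R := R) n (D.mulVec V i) = 0 := by
          simp only [Matrix.mulVec, dotProduct, map_sum]
          refine Finset.sum_eq_zero fun j _ => ?_
          rw [PowerSeries.coeff_mul]
          refine Finset.sum_eq_zero fun p hp => ?_
          rw [Finset.HasAntidiagonal.mem_antidiagonal] at hp
          by_cases hpk : p.1 < k
          · rw [hDcoeff _ _ _ hpk, zero_mul]
          · rw [hVval _ p.2 (by omega), mul_zero]
        have hAE : PowerSeries.coeff (R := R) n (A.mulVec E i) = 0 :=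
          vc_coeff_mulVec_zero _ _ _ (fun j q hq => ih q (by omega) (by omega) j) i
        rw [hDV, hAE, add_zero]
  intro i n hn
  have h := key n (by omega) i
  rw [hE] at h
  simpa [sub_eq_zero] using h
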